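/- Every maximal monotone operator T with nonempty domain on a reflexive separable Banach space X admits a selfdual Lagrangian N on X × X* with T = ∂̄N, i.e., p ∈ Tx if and only if N(x,p) = ⟨x,p⟩. -/

import Mathlib

open NormedSpace

/-- Legendre transform of a Lagrangian in both variables. -/
noncomputable def LagConj {X : Type*} [NormedAddCommGroup X] [NormedSpace ℝ X]
    (L : X × StrongDual ℝ X → EReal) (p : StrongDual ℝ X) (u : X) : EReal :=
  ⨆ yq : X × StrongDual ℝ X, (((p yq.1) + (yq.2 u) : ℝ) : EReal) - L yq

namespace Stmt13Aux

/- EReal helper lemmas -/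

lemma er_aux1 (a : ℝ) (c d : EReal) (h : (a : EReal) - d ≤ c) : (a : EReal) - c ≤ d := by
  induction c using EReal.rec with
  | bot =>
    induction d using EReal.rec with
    | bot => rw [EReal.coe_sub_bot] at h; exact absurd h (by simp)
    | coe d => rw [← EReal.coe_sub] at h; exact absurd h (by simp [← EReal.coe_sub])
    | top => simp
  | coe c =>
    induction d using EReal.rec with
    | bot => rw [EReal.coe_sub_bot] at h; exact absurd h (by simp)
    | coe d =>
      rw [← EReal.coe_sub] at h ⊢
      rw [EReal.coe_le_coe_iff] at h ⊢
      linarith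
    | top => simp [EReal.sub_top]
  | top => simp [EReal.sub_top]

lemma er_aux2 (a b : ℝ) (d : EReal) (h : ((a - b : ℝ) : EReal) ≤ d) :
    (a : EReal) - d ≤ (b : EReal) := by
  induction d using EReal.rec with
  | bot => exact absurd h (by simp [← EReal.coe_sub])
  | coe d =>
    rw [EReal.coe_le_coe_iff] at h
    rw [← EReal.coe_sub, EReal.coe_le_coe_iff]
    linarith
  | top => simp [EReal.sub_top]

lemma er_aux3 (a c : ℝ) (d : EReal) (h : (a : EReal) - d ≤ (c : EReal)) :
    ((a - c : ℝ) : EReal) ≤ d := by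
  induction d using EReal.rec with
  | bot => rw [EReal.coe_sub_bot] at h; exact absurd h (by simp)
  | coe d =>
    rw [← EReal.coe_sub, EReal.coe_le_coe_iff] at h
    rw [EReal.coe_le_coe_iff]
    linarith
  | top => simp

open Classical in
/-- midpoint of two `EReal`s, sending `⊤` whenever one of them is `⊤`.
(Intended use: both arguments `> ⊥`.) -/
noncomputable def midE (a b : EReal) : EReal :=
  if a = ⊤ ∨ b = ⊤ then ⊤ else (((a.toReal + b.toReal) / 2 : ℝ) : EReal)

lemma midE_le_left (a b : EReal) (hb : ⊥ < b) (hba : b ≤ a) : midE a b ≤ a := by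
  by_cases ha : a = ⊤
  · simp [ha]
  · have hbt : b ≠ ⊤ := fun hbt => ha (top_le_iff.1 (hbt ▸ hba))
    rw [midE, if_neg (by tauto)]
    induction a using EReal.rec with
    | bot => exact absurd (lt_of_lt_of_le hb hba) (by simp)
    | coe a =>
      induction b using EReal.rec with
      | bot => simp at hb
      | coe b =>
        rw [EReal.coe_le_coe_iff] at hba ⊢
        simp only [EReal.toReal_coe]
        linarith
      | top => simp at hbt
    | top => simp at ha

lemma midE_bound (b : ℝ) (p q r s : EReal) (h1 : (b : EReal) - p ≤ r) (h2 : (b : EReal) - q ≤ s) :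
    (b : EReal) - midE p q ≤ midE s r := by
  by_cases hpq : p = ⊤ ∨ q = ⊤
  · rw [midE, if_pos hpq, EReal.sub_top]; exact bot_le
  · by_cases hsr : s = ⊤ ∨ r = ⊤
    · rw [show midE s r = ⊤ from by rw [midE, if_pos hsr]]; exact le_top
    · push_neg at hpq hsr
      rw [midE, if_neg (by tauto), midE, if_neg (by tauto)]
      induction p using EReal.rec with
      | bot => rw [EReal.coe_sub_bot] at h1; exact absurd (top_le_iff.1 h1) hsr.2
      | coe p =>
        induction q using EReal.rec with
        | bot => rw [EReal.coe_sub_bot] at h2; exact absurd (top_le_iff.1 h2) hsr.1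
        | coe q =>
          induction r using EReal.rec with
          | bot =>
            rw [← EReal.coe_sub] at h1; exact absurd h1 (by simp [← EReal.coe_sub])
          | coe r =>
            induction s using EReal.rec with
            | bot => rw [← EReal.coe_sub] at h2; exact absurd h2 (by simp [← EReal.coe_sub])
            | coe s =>
              rw [← EReal.coe_sub, EReal.coe_le_coe_iff] at h1 h2 ⊢
              simp only [EReal.toReal_coe]
              linarith
            | top => exact absurd rfl hsr.1
          | top => exact absurd rfl hsr.2
        | top => exact absurd rfl hpq.2
      | top => exact absurd rfl hpq.1

lemma midE_descend (a d : EReal) (hat : a ≠ ⊤) (hd : ⊥ < d) (h : a ≤ midE a d) : a ≤ d := by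
  by_cases hdt : d = ⊤
  · simp [hdt]
  · rw [midE, if_neg (by tauto)] at h
    induction a using EReal.rec with
    | bot => exact bot_le
    | coe a =>
      induction d using EReal.rec with
      | bot => simp at hd
      | coe d =>
        rw [EReal.coe_le_coe_iff] at h ⊢
        simp only [EReal.toReal_coe] at h
        linarith
      | top => exact le_top
    | top => exact absurd rfl hat


section Jc

variable {X : Type*} [NormedAddCommGroup X] [NormedSpace ℝ X]

/-- the "swapped" Fenchel conjugate on `X × X*`. -/
noncomputable def Jc (f : X × StrongDual ℝ X → EReal) :
    X × StrongDual ℝ X → EReal :=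
  fun z => ⨆ y : X × StrongDual ℝ X, ((z.2 y.1 + y.2 z.1 : ℝ) : EReal) - f y

lemma LagConj_eq_Jc (f : X × StrongDual ℝ X → EReal) (x : X) (p : StrongDual ℝ X) :
    LagConj f p x = Jc f (x, p) := rfl

lemma Jc_anti {f g : X × StrongDual ℝ X → EReal} (h : f ≤ g) : Jc g ≤ Jc f := by
  intro z
  exact iSup_mono fun y => EReal.sub_le_sub le_rfl (h y)

lemma Jc_Jc_le (f : X × StrongDual ℝ X → EReal) : Jc (Jc f) ≤ f := by
  intro z
  refine iSup_le fun y => ?_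
  have hkey : ((z.2 y.1 + y.2 z.1 : ℝ) : EReal) - f z ≤ Jc f y := by
    have h2 := le_iSup (fun w : X × StrongDual ℝ X =>
      ((y.2 w.1 + w.2 y.1 : ℝ) : EReal) - f w) z
    rw [show (y.2 z.1 + z.2 y.1 : ℝ) = (z.2 y.1 + y.2 z.1 : ℝ) from add_comm _ _] at h2
    exact h2
  exact er_aux1 _ _ _ hkey

lemma Jc_Jc_Jc (f : X × StrongDual ℝ X → EReal) : Jc (Jc (Jc f)) = Jc f :=
  le_antisymm (Jc_Jc_le (Jc f)) (Jc_anti (Jc_Jc_le f))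

lemma le_Jc (f : X × StrongDual ℝ X → EReal) (z y : X × StrongDual ℝ X) :
    ((z.2 y.1 + y.2 z.1 : ℝ) : EReal) - f y ≤ Jc f z :=
  le_iSup (fun w : X × StrongDual ℝ X => ((z.2 w.1 + w.2 z.1 : ℝ) : EReal) - f w) y

lemma Jc_le {f : X × StrongDual ℝ X → EReal} {z : X × StrongDual ℝ X} {c : EReal}
    (h : ∀ y, ((z.2 y.1 + y.2 z.1 : ℝ) : EReal) - f y ≤ c) : Jc f z ≤ c :=
  iSup_le h

end Jc

end Stmt13Aux

open Stmt13Aux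

/-- Every maximal monotone operator `T` with nonempty domain on a
reflexive separable Banach space `X` admits a selfdual Lagrangian `N` on
`X × X*` such that `T = ∂̄N`, i.e., `p ∈ Tx ↔ N(x,p) = ⟨x,p⟩`. -/
theorem stmt13 {X : Type*} [NormedAddCommGroup X] [NormedSpace ℝ X] [CompleteSpace X]
    [TopologicalSpace.SeparableSpace X]
    (hrefl : Function.Surjective (NormedSpace.inclusionInDoubleDual ℝ X))
    (T : X → Set (StrongDual ℝ X))
    (hmono : ∀ x y : X, ∀ p q : StrongDual ℝ X, p ∈ T x → q ∈ T y → 0 ≤ (p - q) (x - y))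
    (hmax : ∀ x : X, ∀ p : StrongDual ℝ X,
      (∀ y : X, ∀ q : StrongDual ℝ X, q ∈ T y → 0 ≤ (p - q) (x - y)) → p ∈ T x)
    (hdom : ∃ x, (T x).Nonempty) :
    ∃ N : X × StrongDual ℝ X → EReal,
      (∀ x p, LagConj N p x = N (x, p)) ∧
      (∀ x p, p ∈ T x ↔ N (x, p) = ((p x : ℝ) : EReal)) := by
  classical
  obtain ⟨x₀, p₀, hp₀⟩ := hdom
  -- the Lagrangian of the graph of `T`, and the Fitzpatrick function `F`
  set G : X × StrongDual ℝ X → EReal :=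
    fun z => if z.2 ∈ T z.1 then ((z.2 z.1 : ℝ) : EReal) else ⊤ with hGdef
  set F : X × StrongDual ℝ X → EReal := Jc G with hFdef
  have hGgraph : ∀ z : X × StrongDual ℝ X, z.2 ∈ T z.1 → G z = ((z.2 z.1 : ℝ) : EReal) := by
    intro z hz; rw [hGdef]; exact if_pos hz
  have hGoff : ∀ z : X × StrongDual ℝ X, ¬ z.2 ∈ T z.1 → G z = ⊤ := by
    intro z hz; rw [hGdef]; exact if_neg hz
  have hFgraph : ∀ z : X × StrongDual ℝ X, z.2 ∈ T z.1 → F z = ((z.2 z.1 : ℝ) : EReal) := by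
    intro z hz
    refine le_antisymm (Jc_le fun w => ?_) ?_
    · by_cases hw : w.2 ∈ T w.1
      · rw [hGgraph w hw, ← EReal.coe_sub, EReal.coe_le_coe_iff]
        have hm := hmono z.1 w.1 z.2 w.2 hz hw
        simp only [ContinuousLinearMap.sub_apply, map_sub] at hm
        linarith
      · rw [hGoff w hw, EReal.sub_top]
        exact bot_le
    · have h2 := le_Jc G z z
      rw [hGgraph z hz, ← EReal.coe_sub] at h2
      calc ((z.2 z.1 : ℝ) : EReal)
          = (((z.2 z.1 + z.2 z.1) - z.2 z.1 : ℝ) : EReal) := by norm_num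
        _ ≤ Jc G z := h2
  have hFbot : ∀ z : X × StrongDual ℝ X, (⊥ : EReal) < F z := by
    intro z
    have h1 := le_Jc G z (x₀, p₀)
    rw [hGgraph (x₀, p₀) hp₀, ← EReal.coe_sub] at h1
    exact lt_of_lt_of_le (EReal.bot_lt_coe _) h1
  have hFJJ : Jc (Jc F) = F := Jc_Jc_Jc G
  have hFleJF : F ≤ Jc F := by
    intro z
    refine Jc_le fun w => ?_
    by_cases hw : w.2 ∈ T w.1
    · rw [hGgraph w hw, ← hFgraph w hw]
      exact le_Jc F z w
    · rw [hGoff w hw, EReal.sub_top]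
      exact bot_le
  -- the family for Zorn's lemma
  set P : Set (X × StrongDual ℝ X → EReal) :=
    {v | F ≤ v ∧ Jc (Jc v) = v ∧ v ≤ Jc v} with hPdef
  have hFP : F ∈ P := ⟨le_rfl, hFJJ, hFleJF⟩
  have hzorn : ∃ m, F ≤ m ∧ Maximal (· ∈ P) m := by
    refine zorn_le_nonempty₀ P ?_ F hFP
    intro C hCP hchain y₀ hy₀
    set V : X × StrongDual ℝ X → EReal := fun z => ⨆ v : C, (v : X × StrongDual ℝ X → EReal) z with hVdef
    have hcross : ∀ v ∈ C, ∀ v' ∈ C, v ≤ Jc v' := by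
      intro v hv v' hv'
      rcases hchain.total hv hv' with h | h
      · exact le_trans h (hCP hv').2.2
      · exact le_trans (hCP hv).2.2 (Jc_anti h)
    have hVle : ∀ v' ∈ C, V ≤ Jc v' := by
      intro v' hv' z
      exact iSup_le fun v => hcross v.1 v.2 v' hv' z
    have hvleV : ∀ v ∈ C, v ≤ V := by
      intro v hv z
      exact le_iSup (fun w : C => (w : X × StrongDual ℝ X → EReal) z) ⟨v, hv⟩
    have hVJV : V ≤ Jc V := by
      intro z
      refine iSup_le fun v => ?_
      have h1 : Jc (Jc v.1) ≤ Jc V := Jc_anti (hVle v.1 v.2)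
      rw [(hCP v.2).2.1] at h1
      exact h1 z
    have hbound : ∀ v ∈ C, v ≤ Jc (Jc V) := by
      intro v hv
      calc v = Jc (Jc v) := ((hCP hv).2.1).symm
        _ ≤ Jc (Jc V) := Jc_anti (Jc_anti (hvleV v hv))
    refine ⟨Jc (Jc V), ⟨le_trans (hCP hy₀).1 (hbound y₀ hy₀), Jc_Jc_Jc (Jc V), ?_⟩, hbound⟩
    rw [Jc_Jc_Jc V]
    exact Jc_anti hVJV
  obtain ⟨vs, hFv, hvsmax⟩ := hzorn
  obtain ⟨-, hJJv, hvJv⟩ := hvsmax.1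
  have hJu : Jc (Jc vs) = vs := hJJv
  have hvbot : ∀ z, (⊥ : EReal) < vs z := fun z => lt_of_lt_of_le (hFbot z) (hFv z)
  -- the key consequence of maximality
  have key : ∀ m : X × StrongDual ℝ X → EReal, m ≤ Jc vs → Jc m ≤ m → Jc vs ≤ m := by
    intro m hmu hJm
    have hvsa : vs ≤ Jc m := by
      rw [← hJu]
      exact Jc_anti hmu
    have haP : Jc m ∈ P := ⟨le_trans hFv hvsa, Jc_Jc_Jc m, Jc_anti hJm⟩
    have h1 : Jc m ≤ vs := hvsmax.2 haP hvsa
    have heq : Jc m = vs := le_antisymm h1 hvsa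
    calc Jc vs = Jc (Jc m) := by rw [heq]
      _ ≤ m := Jc_Jc_le m
  -- step 1 : on the domain of `Jc vs`, the two functions agree
  have hstep1 : ∀ z, Jc vs z ≠ ⊤ → Jc vs z ≤ vs z := by
    have hm₀u : (fun z => midE (Jc vs z) (vs z)) ≤ Jc vs :=
      fun z => midE_le_left (Jc vs z) (vs z) (hvbot z) (hvJv z)
    have hJm₀ : Jc (fun z => midE (Jc vs z) (vs z)) ≤ (fun z => midE (Jc vs z) (vs z)) := by
      intro z
      refine Jc_le fun y => ?_
      have h1 : ((z.2 y.1 + y.2 z.1 : ℝ) : EReal) - Jc vs y ≤ vs z := by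
        have h2 := le_Jc (Jc vs) z y
        rwa [hJu] at h2
      have h2 : ((z.2 y.1 + y.2 z.1 : ℝ) : EReal) - vs y ≤ Jc vs z := le_Jc vs z y
      exact midE_bound _ _ _ _ _ h1 h2
    have hum₀ := key _ hm₀u hJm₀
    intro z hz
    exact midE_descend (Jc vs z) (vs z) hz (hvbot z) (hum₀ z)
  -- step 2 : the functions have the same domain
  have hstep2 : ∀ z, Jc vs z = ⊤ → vs z = ⊤ := by
    intro zs hzs
    by_contra hvzs
    obtain ⟨c, hvc⟩ : ∃ c : ℝ, vs zs = (c : EReal) :=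
      ⟨(vs zs).toReal, (EReal.coe_toReal hvzs (hvbot zs).ne').symm⟩
    set w : X × StrongDual ℝ X → EReal :=
      fun y => max (vs y) (((zs.2 y.1 + y.2 zs.1 - c : ℝ)) : EReal) with hwdef
    have hvw : vs ≤ w := fun y => le_max_left _ _
    have hwu : w ≤ Jc vs := by
      intro y
      refine max_le (hvJv y) ?_
      have h1 : ((zs.2 y.1 + y.2 zs.1 : ℝ) : EReal) - Jc vs y ≤ (c : EReal) := by
        have h2 := le_Jc (Jc vs) zs y
        rwa [hJu, hvc] at h2
      exact er_aux3 _ _ _ h1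
    have hmu : (fun ζ => max (Jc w ζ) (Jc (Jc w) ζ)) ≤ Jc vs := by
      intro ζ
      refine max_le (Jc_anti hvw ζ) ?_
      have h3 : Jc (Jc w) ≤ Jc (Jc (Jc vs)) := Jc_anti (Jc_anti hwu)
      rw [Jc_Jc_Jc vs] at h3
      exact h3 ζ
    have hJm : Jc (fun ζ => max (Jc w ζ) (Jc (Jc w) ζ)) ≤
        (fun ζ => max (Jc w ζ) (Jc (Jc w) ζ)) := by
      intro ζ
      have h4 : Jc (fun ζ => max (Jc w ζ) (Jc (Jc w) ζ)) ≤ Jc (Jc w) :=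
        Jc_anti (fun ξ => le_max_left _ _)
      exact le_trans (h4 ζ) (le_max_right _ _)
    have hum := key _ hmu hJm
    have h5 : Jc w zs ≤ (c : EReal) := by
      refine Jc_le fun y => ?_
      have h6 : ((zs.2 y.1 + y.2 zs.1 - c : ℝ) : EReal) ≤ w y := le_max_right _ _
      calc ((zs.2 y.1 + y.2 zs.1 : ℝ) : EReal) - w y
          ≤ ((zs.2 y.1 + y.2 zs.1 : ℝ) : EReal) - ((zs.2 y.1 + y.2 zs.1 - c : ℝ) : EReal) :=
            EReal.sub_le_sub le_rfl h6
        _ = (c : EReal) := by rw [← EReal.coe_sub]; norm_num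
    have h8 : Jc (Jc w) zs ≤ w zs := Jc_Jc_le w zs
    have h9 : w zs < ⊤ := by
      have h9a : w zs = max (vs zs) (((zs.2 zs.1 + zs.2 zs.1 - c : ℝ)) : EReal) := rfl
      rw [h9a, hvc]
      exact max_lt (EReal.coe_lt_top c) (EReal.coe_lt_top _)
    have h10 : max (Jc w zs) (Jc (Jc w) zs) < ⊤ :=
      max_lt (lt_of_le_of_lt h5 (EReal.coe_lt_top c)) (lt_of_le_of_lt h8 h9)
    have h11 := hum zs
    rw [hzs] at h11
    exact absurd (top_le_iff.1 h11) h10.ne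
  -- conclusion : `vs` is autoconjugate
  have hEq : Jc vs = vs := by
    funext z
    by_cases hz : Jc vs z = ⊤
    · rw [hz, hstep2 z hz]
    · exact le_antisymm (hstep1 z hz) (hvJv z)
  -- finish
  refine ⟨vs, fun x p => ?_, fun x p => ?_⟩
  · rw [LagConj_eq_Jc, hEq]
  · constructor
    · intro hp
      have hzle : vs (x, p) ≤ ((p x : ℝ) : EReal) := by
        have h1 : vs ≤ Jc F := by
          have h2 := Jc_anti hFv
          rwa [hEq] at h2
        refine le_trans (h1 (x, p)) ?_
        refine Jc_le fun y => ?_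
        have h3 := le_Jc G y (x, p)
        rw [hGgraph (x, p) hp, ← EReal.coe_sub, ← hFdef] at h3
        have h2 : (((x, p).2 y.1 + y.2 (x, p).1 - p x : ℝ) : EReal) ≤ F y := by
          show ((p y.1 + y.2 x - p x : ℝ) : EReal) ≤ F y
          rw [show (p y.1 + y.2 x - p x : ℝ) = (y.2 x + p y.1 - p x : ℝ) by ring]
          exact h3
        exact er_aux2 _ _ _ h2
      have hzge : ((p x : ℝ) : EReal) ≤ vs (x, p) := by
        have h4 := le_Jc vs (x, p) (x, p)
        rw [hEq] at h4
        have hne_t : vs (x, p) ≠ ⊤ := by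
          intro h
          rw [h] at hzle
          exact EReal.coe_ne_top _ (top_le_iff.1 hzle)
        obtain ⟨r, hr⟩ : ∃ r : ℝ, vs (x, p) = (r : EReal) :=
          ⟨(vs (x, p)).toReal, (EReal.coe_toReal hne_t (hvbot (x, p)).ne').symm⟩
        rw [hr] at h4 hzle ⊢
        rw [← EReal.coe_sub, EReal.coe_le_coe_iff] at h4
        rw [EReal.coe_le_coe_iff] at hzle ⊢
        have h4' : p x + p x - r ≤ r := h4
        linarith
      exact le_antisymm hzle hzge
    · intro hN
      refine hmax x p (fun y q hq => ?_)
      have h5 := le_Jc G (x, p) (y, q)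
      rw [hGgraph (y, q) hq, ← EReal.coe_sub, ← hFdef] at h5
      have h5' : ((p y + q x - q y : ℝ) : EReal) ≤ F (x, p) := h5
      have h6 : ((p y + q x - q y : ℝ) : EReal) ≤ ((p x : ℝ) : EReal) := by
        refine le_trans h5' ?_
        rw [← hN]
        exact hFv (x, p)
      rw [EReal.coe_le_coe_iff] at h6
      simp only [ContinuousLinearMap.sub_apply, map_sub]
      linarith
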